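/- Let (A, p_A) and (B, p_B) be independent ensembles of functions U^n → Im A and V^n → Im B respectively, each satisfying the strong hash condition with constants (α_A, β_A) and (α_B, β_B). Let a and b be drawn uniformly and independently from Im A and Im B. Then for every nonempty T ⊆ U^n × V^n: P({(A,B,a,b) : T ∩ (C_A(a) × C_B(b)) = ∅}) ≤ α_Aα_B − 1 + |Im B|·(max_{v∈T_V}|T_{U|V}(v)|)·α_A(β_B+1)/|T| + |Im A|·(max_{u∈T_U}|T_{V|U}(u)|)·α_B(β_A+1)/|T| + |Im A||Im B|·(β_A+β_B+β_Aβ_B+1)/|T|. -/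

import Mathlib

open Finset
open scoped Classical

/-- Collision probability `p_A({A : Au = Au'})` for an ensemble of functions. -/
noncomputable def collP {𝒜 X B : Type*} [Fintype 𝒜] (p : 𝒜 → ℝ)
    (F : 𝒜 → X → B) (u u' : X) : ℝ :=
  ∑ a : 𝒜, if F a u = F a u' then p a else 0

/-- The strong (α,β)-hash condition for an ensemble of functions `X → B`. -/
noncomputable def StrongHash {𝒜 X B : Type*} [Fintype 𝒜] [Fintype X] [Fintype B]
    (p : 𝒜 → ℝ) (F : 𝒜 → X → B) (α β : ℝ) : Prop :=
  ∀ u : X,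
    ∑ u' ∈ (Finset.univ.erase u).filter
        (fun u' => α / (Fintype.card B : ℝ) < collP p F u u'),
      collP p F u u' ≤ β

lemma collP_nonneg {𝒜 X B : Type*} [Fintype 𝒜] (p : 𝒜 → ℝ) (hp : ∀ a, 0 ≤ p a)
    (F : 𝒜 → X → B) (u u' : X) : 0 ≤ collP p F u u' :=
  Finset.sum_nonneg fun a _ => by split_ifs; exacts [hp a, le_refl _]

lemma collP_self {𝒜 X B : Type*} [Fintype 𝒜] (p : 𝒜 → ℝ) (hp1 : ∑ a : 𝒜, p a = 1)
    (F : 𝒜 → X → B) (u : X) : collP p F u u = 1 := by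
  simp [collP, hp1]

/-- Decomposition of collision probabilities from the strong hash condition. -/
lemma strong_decomp {𝒜 X B : Type*} [Fintype 𝒜] [Fintype X] [Fintype B]
    (p : 𝒜 → ℝ) (hp : ∀ a, 0 ≤ p a) (hp1 : ∑ a : 𝒜, p a = 1)
    (F : 𝒜 → X → B) (α β : ℝ) (hα : 0 ≤ α) (hS : StrongHash p F α β) :
    ∃ e : X → X → ℝ, (∀ u u', 0 ≤ e u u') ∧
      (∀ u u', collP p F u u' ≤ α / (Fintype.card B : ℝ) + e u u') ∧
      (∀ u, ∑ u' : X, e u u' ≤ β + 1) := by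
  have hc : (0:ℝ) < (Fintype.card B : ℝ) ∨ (0:ℝ) ≤ α / (Fintype.card B : ℝ) := by
    rcases Nat.eq_zero_or_pos (Fintype.card B) with h | h
    · right; simp [h]
    · left; exact_mod_cast h
  have hαc : 0 ≤ α / (Fintype.card B : ℝ) := by
    rcases hc with h | h
    · exact div_nonneg hα h.le
    · exact h
  refine ⟨fun u u' => if u = u' ∨ α / (Fintype.card B : ℝ) < collP p F u u'
      then collP p F u u' else 0, ?_, ?_, ?_⟩
  · intro u u'; dsimp only; split_ifs
    exacts [collP_nonneg p hp F u u', le_refl _]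
  · intro u u'; dsimp only; split_ifs with h
    · linarith [hαc]
    · push_neg at h
      linarith [h.2, collP_nonneg p hp F u u']
  · intro u
    beta_reduce
    rw [← Finset.sum_erase_add _ _ (Finset.mem_univ u)]
    have h1 : (if u = u ∨ α / (Fintype.card B : ℝ) < collP p F u u
        then collP p F u u else 0) = 1 := by
      rw [if_pos (Or.inl rfl), collP_self p hp1]
    rw [h1]
    have h2 : ∑ u' ∈ Finset.univ.erase u,
        (if u = u' ∨ α / (Fintype.card B : ℝ) < collP p F u u'
          then collP p F u u' else 0)
        = ∑ u' ∈ (Finset.univ.erase u).filter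
            (fun u' => α / (Fintype.card B : ℝ) < collP p F u u'),
          collP p F u u' := by
      rw [Finset.sum_filter]
      refine Finset.sum_congr rfl fun u' hu' => ?_
      have : ¬ (u = u') := fun h => (Finset.ne_of_mem_erase hu') h.symm
      by_cases hb : α / (Fintype.card B : ℝ) < collP p F u u' <;> simp [this, hb]
    rw [h2]
    linarith [hS u]

/-- Second-moment bound: the probability that a nonnegative random variable vanishes. -/
lemma pz_bound {Ω : Type*} [Fintype Ω] (μ N : Ω → ℝ) (hμ : ∀ ω, 0 ≤ μ ω)
    (hμ1 : ∑ ω : Ω, μ ω = 1) (hE1 : 0 < ∑ ω : Ω, μ ω * N ω) :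
    ∑ ω : Ω, (if N ω = 0 then μ ω else 0) ≤
      (∑ ω : Ω, μ ω * N ω ^ 2) / (∑ ω : Ω, μ ω * N ω) ^ 2 - 1 := by
  set E1 := ∑ ω : Ω, μ ω * N ω with hE1def
  set E2 := ∑ ω : Ω, μ ω * N ω ^ 2 with hE2def
  set Q := ∑ ω : Ω, (if N ω = 0 then (0:ℝ) else μ ω) with hQdef
  have hcs : E1 ^ 2 ≤ Q * E2 := by
    have h := Finset.sum_mul_sq_le_sq_mul_sq Finset.univ
      (fun ω => Real.sqrt (μ ω) * (if N ω = 0 then 0 else 1))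
      (fun ω => Real.sqrt (μ ω) * N ω)
    have h1 : ∑ ω : Ω, (Real.sqrt (μ ω) * (if N ω = 0 then 0 else 1)) *
        (Real.sqrt (μ ω) * N ω) = E1 := by
      refine Finset.sum_congr rfl fun ω _ => ?_
      rcases eq_or_ne (N ω) 0 with h0 | h0
      · simp [h0]
      · rw [if_neg h0, mul_one, ← mul_assoc, Real.mul_self_sqrt (hμ ω)]
    have h2 : ∑ ω : Ω, (Real.sqrt (μ ω) * (if N ω = 0 then (0:ℝ) else 1)) ^ 2 = Q := by
      refine Finset.sum_congr rfl fun ω _ => ?_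
      rcases eq_or_ne (N ω) 0 with h0 | h0
      · simp [h0]
      · rw [if_neg h0, if_neg h0, mul_one, Real.sq_sqrt (hμ ω)]
    have h3 : ∑ ω : Ω, (Real.sqrt (μ ω) * N ω) ^ 2 = E2 := by
      refine Finset.sum_congr rfl fun ω _ => ?_
      rw [mul_pow, Real.sq_sqrt (hμ ω)]
    rw [h1, h2, h3] at h
    exact h
  have hQ0 : 0 ≤ Q := Finset.sum_nonneg fun ω _ => by
    split_ifs; exacts [le_refl _, hμ ω]
  have hQ1 : Q ≤ 1 := by
    rw [← hμ1]
    exact Finset.sum_le_sum fun ω _ => by split_ifs; exacts [hμ ω, le_refl _]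
  have hE2pos : 0 < E2 := by nlinarith [pow_pos hE1 2]
  have hP0 : ∑ ω : Ω, (if N ω = 0 then μ ω else 0) = 1 - Q := by
    rw [← hμ1, hQdef, ← Finset.sum_sub_distrib]
    refine Finset.sum_congr rfl fun ω _ => ?_
    split_ifs <;> ring
  rw [hP0]
  have hE1sq : 0 < E1 ^ 2 := pow_pos hE1 2
  rw [le_sub_iff_add_le, le_div_iff₀ hE1sq]
  nlinarith [mul_nonneg hE2pos.le (sq_nonneg (1 - Q)),
    mul_le_mul_of_nonneg_right hcs (by linarith : (0:ℝ) ≤ 2 - Q)]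

/-- Summing a composed function over a finset, bounded via maximal fiber size. -/
lemma sum_comp_le {γ δ : Type*} [Fintype δ] [DecidableEq δ] (s : Finset γ) (g : γ → δ)
    (f : δ → ℝ) (hf : ∀ d, 0 ≤ f d) :
    ∑ x ∈ s, f (g x) ≤
      ((s.image g).sup (fun d => (s.filter fun x => g x = d).card) : ℕ) * ∑ d : δ, f d := by
  rw [Finset.sum_comp]
  set M : ℕ := (s.image g).sup (fun d => (s.filter fun x => g x = d).card) with hM
  calc ∑ d ∈ s.image g, (s.filter fun x => g x = d).card • f d
      ≤ ∑ d ∈ s.image g, (M:ℝ) * f d := by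
        refine Finset.sum_le_sum fun d hd => ?_
        rw [nsmul_eq_mul]
        exact mul_le_mul_of_nonneg_right
          (by exact_mod_cast Finset.le_sup (f := fun d => (s.filter fun x => g x = d).card) hd)
          (hf d)
    _ = (M:ℝ) * ∑ d ∈ s.image g, f d := by rw [Finset.mul_sum]
    _ ≤ (M:ℝ) * ∑ d : δ, f d := by
        refine mul_le_mul_of_nonneg_left ?_ (by positivity)
        exact Finset.sum_le_sum_of_subset_of_nonneg (Finset.subset_univ _)
          (fun d _ _ => hf d)

lemma ite_ite_sum {β : Type*} [Fintype β] (x y : β) :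
    ∑ z : β, (if x = z then (1:ℝ) else 0) * (if y = z then 1 else 0)
    = if x = y then (1:ℝ) else 0 := by
  classical
  by_cases h : x = y
  · subst h; simp [← ite_and, and_self]
  · rw [if_neg h]
    refine Finset.sum_eq_zero fun z _ => ?_
    by_cases hx : x = z
    · have : ¬ (y = z) := fun hy => h (hx.trans hy.symm)
      simp [hx, this]
    · simp [hx]

lemma ite_one_prod {BA BB : Type*} [Fintype BA] [Fintype BB] (c1 c2 : BA) (d1 d2 : BB) :
    ∑ ba : BA, ∑ bb : BB,
      (if c1 = ba ∧ d1 = bb then (1:ℝ) else 0) * (if c2 = ba ∧ d2 = bb then 1 else 0)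
    = (if c1 = c2 then (1:ℝ) else 0) * (if d1 = d2 then 1 else 0) := by
  have hterm : ∀ (ba : BA) (bb : BB),
      (if c1 = ba ∧ d1 = bb then (1:ℝ) else 0) * (if c2 = ba ∧ d2 = bb then 1 else 0)
      = ((if c1 = ba then (1:ℝ) else 0) * (if c2 = ba then 1 else 0)) *
        ((if d1 = bb then (1:ℝ) else 0) * (if d2 = bb then 1 else 0)) := by
    intro ba bb
    by_cases h1 : c1 = ba <;> by_cases h2 : d1 = bb <;> by_cases h3 : c2 = ba <;>
      by_cases h4 : d2 = bb <;> simp [h1, h2, h3, h4]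
  simp_rw [hterm, ← Finset.mul_sum, ← Finset.sum_mul]
  rw [ite_ite_sum, ite_ite_sum]

lemma card_filter_sum {γ BA BB : Type*} [Fintype BA] [Fintype BB]
    (s : Finset γ) (f : γ → BA) (g : γ → BB) :
    ∑ ba : BA, ∑ bb : BB, ((s.filter fun w => f w = ba ∧ g w = bb).card : ℝ)
      = (s.card : ℝ) := by
  have hcast : ∀ (ba : BA) (bb : BB),
      ((s.filter fun w => f w = ba ∧ g w = bb).card : ℝ)
      = ∑ w ∈ s, if f w = ba ∧ g w = bb then (1:ℝ) else 0 := by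
    intro ba bb; rw [Finset.sum_boole]
  simp_rw [hcast]
  rw [show (∑ ba : BA, ∑ bb : BB, ∑ w ∈ s, if f w = ba ∧ g w = bb then (1:ℝ) else 0)
      = ∑ w ∈ s, ∑ ba : BA, ∑ bb : BB, (if f w = ba ∧ g w = bb then (1:ℝ) else 0) from ?_]
  · rw [Finset.sum_congr rfl (fun w _ => ?_), Finset.sum_const, nsmul_eq_mul, mul_one]
    have := ite_one_prod (f w) (f w) (g w) (g w)
    simp only [if_pos rfl, mul_one] at this
    calc ∑ ba : BA, ∑ bb : BB, (if f w = ba ∧ g w = bb then (1:ℝ) else 0)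
        = ∑ ba : BA, ∑ bb : BB,
            (if f w = ba ∧ g w = bb then (1:ℝ) else 0) *
            (if f w = ba ∧ g w = bb then 1 else 0) := by
          refine Finset.sum_congr rfl fun ba _ => Finset.sum_congr rfl fun bb _ => ?_
          split_ifs <;> norm_num
      _ = 1 := by rw [_root_.ite_one_prod]; simp
  · rw [Finset.sum_congr rfl fun ba _ => Finset.sum_comm, Finset.sum_comm]

lemma card_filter_sq_sum {γ BA BB : Type*} [Fintype BA] [Fintype BB]
    (s : Finset γ) (f : γ → BA) (g : γ → BB) :
    ∑ ba : BA, ∑ bb : BB, ((s.filter fun w => f w = ba ∧ g w = bb).card : ℝ) ^ 2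
      = ∑ w ∈ s, ∑ w' ∈ s,
          (if f w = f w' then (1:ℝ) else 0) * (if g w = g w' then 1 else 0) := by
  have hcast : ∀ (ba : BA) (bb : BB),
      ((s.filter fun w => f w = ba ∧ g w = bb).card : ℝ) ^ 2
      = ∑ w ∈ s, ∑ w' ∈ s, (if f w = ba ∧ g w = bb then (1:ℝ) else 0) *
          (if f w' = ba ∧ g w' = bb then 1 else 0) := by
    intro ba bb
    rw [sq, ← Finset.sum_boole (p := fun w => f w = ba ∧ g w = bb) (s := s), Finset.sum_mul_sum]
  simp_rw [hcast]
  rw [Finset.sum_congr rfl fun ba _ => Finset.sum_comm, Finset.sum_comm]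
  refine Finset.sum_congr rfl fun w _ => ?_
  rw [Finset.sum_congr rfl fun ba _ => Finset.sum_comm, Finset.sum_comm]
  refine Finset.sum_congr rfl fun w' _ => ?_
  exact ite_one_prod (f w) (f w') (g w) (g w')

lemma sum_sum_mul_mul {A B : Type*} [Fintype A] [Fintype B] (f : A → ℝ) (g : B → ℝ) (c : ℝ) :
    ∑ a : A, ∑ b : B, c * (f a * g b) = c * ((∑ a : A, f a) * (∑ b : B, g b)) := by
  rw [Finset.sum_mul_sum, Finset.mul_sum]
  exact Finset.sum_congr rfl fun a _ => by rw [Finset.mul_sum]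

set_option maxHeartbeats 1600000 in
/-- Saturation property for two independent ensembles with different domains, where
`a` and `b` are uniform on `Im A` and `Im B` respectively, all mutually independent. -/
theorem stmt5 {U V BA BB 𝒜 ℬ : Type*} [Fintype U] [Fintype V] [Fintype BA] [Fintype BB]
    [Nonempty BA] [Nonempty BB] [Fintype 𝒜] [Fintype ℬ] (n : ℕ)
    (p : 𝒜 → ℝ) (hp : ∀ a, 0 ≤ p a) (hp1 : ∑ a : 𝒜, p a = 1)
    (q : ℬ → ℝ) (hq : ∀ b, 0 ≤ q b) (hq1 : ∑ b : ℬ, q b = 1)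
    (F : 𝒜 → (Fin n → U) → BA) (Gf : ℬ → (Fin n → V) → BB)
    (αA βA αB βB : ℝ) (hαA : 0 ≤ αA) (hβA : 0 ≤ βA) (hαB : 0 ≤ αB) (hβB : 0 ≤ βB)
    (hA : StrongHash p F αA βA) (hB : StrongHash q Gf αB βB)
    (T : Finset ((Fin n → U) × (Fin n → V))) (hT : T.Nonempty) :
    ∑ a : 𝒜, ∑ b : ℬ, ∑ ba : BA, ∑ bb : BB,
        (if ∀ w ∈ T, ¬(F a w.1 = ba ∧ Gf b w.2 = bb)
          then p a * q b * (1 / (Fintype.card BA : ℝ)) * (1 / (Fintype.card BB : ℝ))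
          else 0) ≤
      αA * αB - 1
        + (Fintype.card BB : ℝ)
            * (((T.image Prod.snd).sup fun v' => (T.filter fun w => w.2 = v').card : ℕ) : ℝ)
            * αA * (βB + 1) / (T.card : ℝ)
        + (Fintype.card BA : ℝ)
            * (((T.image Prod.fst).sup fun u' => (T.filter fun w => w.1 = u').card : ℕ) : ℝ)
            * αB * (βA + 1) / (T.card : ℝ)
        + (Fintype.card BA : ℝ) * (Fintype.card BB : ℝ) * (βA + βB + βA * βB + 1)
            / (T.card : ℝ) := by
  have hm : (0:ℝ) < (Fintype.card BA : ℝ) := by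
    exact_mod_cast Fintype.card_pos
  have hk : (0:ℝ) < (Fintype.card BB : ℝ) := by
    exact_mod_cast Fintype.card_pos
  have ht : (0:ℝ) < (T.card : ℝ) := by
    exact_mod_cast Finset.card_pos.mpr hT
  -- the measure and the counting variable on Ω = 𝒜 × ℬ × BA × BB
  set μ : 𝒜 × ℬ × BA × BB → ℝ :=
    fun ω => p ω.1 * q ω.2.1 * (1 / (Fintype.card BA : ℝ)) * (1 / (Fintype.card BB : ℝ))
    with hμdef
  set N : 𝒜 × ℬ × BA × BB → ℝ :=
    fun ω => ((T.filter fun w => F ω.1 w.1 = ω.2.2.1 ∧ Gf ω.2.1 w.2 = ω.2.2.2).card : ℝ)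
    with hNdef
  have hμpos : ∀ ω, 0 ≤ μ ω := fun ω => by
    rw [hμdef]
    have := hp ω.1; have := hq ω.2.1
    positivity
  -- normalization
  have hμ1 : ∑ ω : 𝒜 × ℬ × BA × BB, μ ω = 1 := by
    simp only [hμdef, Fintype.sum_prod_type]
    have hconst : ∀ (a : 𝒜) (b : ℬ), ∑ _ba : BA, ∑ _bb : BB,
        p a * q b * (1 / (Fintype.card BA : ℝ)) * (1 / (Fintype.card BB : ℝ))
        = p a * q b := by
      intro a b
      rw [Finset.sum_const, Finset.sum_const, Finset.card_univ, Finset.card_univ,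
        nsmul_eq_mul, nsmul_eq_mul]
      field_simp
    rw [Finset.sum_congr rfl fun a _ => Finset.sum_congr rfl fun b _ => hconst a b]
    rw [Finset.sum_congr rfl fun a _ => (Finset.mul_sum _ _ _).symm]
    rw [Finset.sum_congr rfl fun a _ => by rw [hq1, mul_one], hp1]
  -- first moment
  have hE1 : ∑ ω : 𝒜 × ℬ × BA × BB, μ ω * N ω
      = (T.card : ℝ) / ((Fintype.card BA : ℝ) * (Fintype.card BB : ℝ)) := by
    simp only [hμdef, hNdef, Fintype.sum_prod_type]
    have h1 : ∀ (a : 𝒜) (b : ℬ), ∑ ba : BA, ∑ bb : BB,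
        p a * q b * (1 / (Fintype.card BA : ℝ)) * (1 / (Fintype.card BB : ℝ)) *
          ((T.filter fun w => F a w.1 = ba ∧ Gf b w.2 = bb).card : ℝ)
        = p a * (q b * ((T.card : ℝ) /
            ((Fintype.card BA : ℝ) * (Fintype.card BB : ℝ)))) := by
      intro a b
      simp_rw [← Finset.mul_sum]
      rw [card_filter_sum T (fun w => F a w.1) (fun w => Gf b w.2)]
      ring
    rw [Finset.sum_congr rfl fun a _ => Finset.sum_congr rfl fun b _ => h1 a b]
    rw [Finset.sum_congr rfl fun a _ => (Finset.mul_sum _ _ _).symm]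
    rw [Finset.sum_congr rfl fun a _ => by rw [(Finset.sum_mul _ _ _).symm, hq1, one_mul]]
    rw [(Finset.sum_mul _ _ _).symm, hp1, one_mul]
  have hE1pos : 0 < ∑ ω : 𝒜 × ℬ × BA × BB, μ ω * N ω := by
    rw [hE1]; positivity
  -- second moment
  have hE2 : ∑ ω : 𝒜 × ℬ × BA × BB, μ ω * N ω ^ 2
      = (∑ w ∈ T, ∑ w' ∈ T, collP p F w.1 w'.1 * collP q Gf w.2 w'.2)
        / ((Fintype.card BA : ℝ) * (Fintype.card BB : ℝ)) := by
    simp only [hμdef, hNdef, Fintype.sum_prod_type]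
    have h1 : ∀ (a : 𝒜) (b : ℬ), ∑ ba : BA, ∑ bb : BB,
        p a * q b * (1 / (Fintype.card BA : ℝ)) * (1 / (Fintype.card BB : ℝ)) *
          ((T.filter fun w => F a w.1 = ba ∧ Gf b w.2 = bb).card : ℝ) ^ 2
        = ∑ x ∈ T ×ˢ T, (1 / (Fintype.card BA : ℝ)) * (1 / (Fintype.card BB : ℝ)) *
            ((p a * if F a x.1.1 = F a x.2.1 then 1 else 0) *
             (q b * if Gf b x.1.2 = Gf b x.2.2 then 1 else 0)) := by
      intro a b
      calc ∑ ba : BA, ∑ bb : BB,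
          p a * q b * (1 / (Fintype.card BA : ℝ)) * (1 / (Fintype.card BB : ℝ)) *
            ((T.filter fun w => F a w.1 = ba ∧ Gf b w.2 = bb).card : ℝ) ^ 2
          = p a * q b * (1 / (Fintype.card BA : ℝ)) * (1 / (Fintype.card BB : ℝ)) *
              ∑ ba : BA, ∑ bb : BB,
                ((T.filter fun w => F a w.1 = ba ∧ Gf b w.2 = bb).card : ℝ) ^ 2 := by
            simp_rw [← Finset.mul_sum]
        _ = p a * q b * (1 / (Fintype.card BA : ℝ)) * (1 / (Fintype.card BB : ℝ)) *
              ∑ x ∈ T ×ˢ T, ((if F a x.1.1 = F a x.2.1 then (1:ℝ) else 0) *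
                (if Gf b x.1.2 = Gf b x.2.2 then 1 else 0)) := by
            rw [card_filter_sq_sum T (fun w => F a w.1) (fun w => Gf b w.2),
              Finset.sum_product' T T (fun w w' => (if F a w.1 = F a w'.1 then (1:ℝ) else 0) *
                  (if Gf b w.2 = Gf b w'.2 then 1 else 0))]
        _ = ∑ x ∈ T ×ˢ T, (1 / (Fintype.card BA : ℝ)) * (1 / (Fintype.card BB : ℝ)) *
              ((p a * if F a x.1.1 = F a x.2.1 then 1 else 0) *
               (q b * if Gf b x.1.2 = Gf b x.2.2 then 1 else 0)) := by
            rw [Finset.mul_sum]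
            exact Finset.sum_congr rfl fun x _ => by ring
    rw [Finset.sum_congr rfl fun a _ => Finset.sum_congr rfl fun b _ => h1 a b]
    rw [Finset.sum_congr rfl fun a _ => Finset.sum_comm, Finset.sum_comm]
    have h2 : ∀ x ∈ T ×ˢ T, ∑ a : 𝒜, ∑ b : ℬ,
        (1 / (Fintype.card BA : ℝ)) * (1 / (Fintype.card BB : ℝ)) *
          ((p a * if F a x.1.1 = F a x.2.1 then 1 else 0) *
           (q b * if Gf b x.1.2 = Gf b x.2.2 then 1 else 0))
        = (1 / (Fintype.card BA : ℝ)) * (1 / (Fintype.card BB : ℝ)) *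
            (collP p F x.1.1 x.2.1 * collP q Gf x.1.2 x.2.2) := by
      intro x _
      have hca : ∀ a : 𝒜, (p a * if F a x.1.1 = F a x.2.1 then (1:ℝ) else 0)
          = if F a x.1.1 = F a x.2.1 then p a else 0 := by
        intro a; split_ifs <;> ring
      have hcb : ∀ b : ℬ, (q b * if Gf b x.1.2 = Gf b x.2.2 then (1:ℝ) else 0)
          = if Gf b x.1.2 = Gf b x.2.2 then q b else 0 := by
        intro b; split_ifs <;> ring
      calc ∑ a : 𝒜, ∑ b : ℬ,
          (1 / (Fintype.card BA : ℝ)) * (1 / (Fintype.card BB : ℝ)) *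
            ((p a * if F a x.1.1 = F a x.2.1 then 1 else 0) *
             (q b * if Gf b x.1.2 = Gf b x.2.2 then 1 else 0))
          = (1 / (Fintype.card BA : ℝ)) * (1 / (Fintype.card BB : ℝ)) *
              ((∑ a : 𝒜, (p a * if F a x.1.1 = F a x.2.1 then 1 else 0)) *
               ∑ b : ℬ, (q b * if Gf b x.1.2 = Gf b x.2.2 then 1 else 0)) :=
            sum_sum_mul_mul _ _ _
        _ = _ := by
            rw [Finset.sum_congr rfl fun a _ => hca a,
              Finset.sum_congr rfl fun b _ => hcb b]
            rfl
    rw [Finset.sum_congr rfl h2]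
    rw [Finset.sum_congr rfl fun x _ => (mul_comm _ _), ← Finset.sum_mul]
    rw [Finset.sum_product' T T (fun w w' => collP p F w.1 w'.1 * collP q Gf w.2 w'.2)]
    field_simp
  -- decompositions from the strong hash conditions
  obtain ⟨eA, heA0, heA1, heA2⟩ := strong_decomp p hp hp1 F αA βA hαA hA
  obtain ⟨eB, heB0, heB1, heB2⟩ := strong_decomp q hq hq1 Gf αB βB hαB hB
  have hMV0 : (0:ℝ) ≤ (((T.image Prod.snd).sup fun v' => (T.filter fun w => w.2 = v').card : ℕ) : ℝ) := by positivity
  have hMU0 : (0:ℝ) ≤ (((T.image Prod.fst).sup fun u' => (T.filter fun w => w.1 = u').card : ℕ) : ℝ) := by positivity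
  -- bound on the second moment sum
  have hSbound : ∑ w ∈ T, ∑ w' ∈ T, collP p F w.1 w'.1 * collP q Gf w.2 w'.2
      ≤ (T.card : ℝ)^2 * (αA * αB / ((Fintype.card BA : ℝ) * (Fintype.card BB : ℝ)))
        + (T.card : ℝ) * ((((T.image Prod.snd).sup fun v' => (T.filter fun w => w.2 = v').card : ℕ) : ℝ)
            * (βB + 1)) * (αA / (Fintype.card BA : ℝ))
        + (T.card : ℝ) * ((((T.image Prod.fst).sup fun u' => (T.filter fun w => w.1 = u').card : ℕ) : ℝ)
            * (βA + 1)) * (αB / (Fintype.card BB : ℝ))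
        + (T.card : ℝ) * ((βA + 1) * (βB + 1)) := by
    have step1 : ∑ w ∈ T, ∑ w' ∈ T, collP p F w.1 w'.1 * collP q Gf w.2 w'.2
        ≤ ∑ w ∈ T, ∑ w' ∈ T,
            (αA / (Fintype.card BA : ℝ) + eA w.1 w'.1) *
            (αB / (Fintype.card BB : ℝ) + eB w.2 w'.2) := by
      refine Finset.sum_le_sum fun w _ => Finset.sum_le_sum fun w' _ => ?_
      refine mul_le_mul (heA1 w.1 w'.1) (heB1 w.2 w'.2)
        (collP_nonneg q hq Gf w.2 w'.2) ?_
      exact add_nonneg (div_nonneg hαA hm.le) (heA0 w.1 w'.1)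
    have expand : ∀ w w' : (Fin n → U) × (Fin n → V),
        (αA / (Fintype.card BA : ℝ) + eA w.1 w'.1) *
        (αB / (Fintype.card BB : ℝ) + eB w.2 w'.2)
        = αA * αB / ((Fintype.card BA : ℝ) * (Fintype.card BB : ℝ))
          + (αA / (Fintype.card BA : ℝ)) * eB w.2 w'.2
          + eA w.1 w'.1 * (αB / (Fintype.card BB : ℝ))
          + eA w.1 w'.1 * eB w.2 w'.2 := by
      intro w w'; ring
    have step2 : ∑ w ∈ T, ∑ w' ∈ T,
        (αA / (Fintype.card BA : ℝ) + eA w.1 w'.1) *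
        (αB / (Fintype.card BB : ℝ) + eB w.2 w'.2)
        = (∑ w ∈ T, ∑ w' ∈ T, αA * αB / ((Fintype.card BA : ℝ) * (Fintype.card BB : ℝ)))
          + (∑ w ∈ T, ∑ w' ∈ T, (αA / (Fintype.card BA : ℝ)) * eB w.2 w'.2)
          + (∑ w ∈ T, ∑ w' ∈ T, eA w.1 w'.1 * (αB / (Fintype.card BB : ℝ)))
          + (∑ w ∈ T, ∑ w' ∈ T, eA w.1 w'.1 * eB w.2 w'.2) := by
      simp_rw [expand, Finset.sum_add_distrib]
    have hP1 : (∑ _w ∈ T, ∑ _w' ∈ T, αA * αB / ((Fintype.card BA : ℝ) * (Fintype.card BB : ℝ)))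
        = (T.card : ℝ)^2 * (αA * αB / ((Fintype.card BA : ℝ) * (Fintype.card BB : ℝ))) := by
      rw [Finset.sum_const, Finset.sum_const, nsmul_eq_mul, nsmul_eq_mul]
      ring
    have hP2 : (∑ w ∈ T, ∑ w' ∈ T, (αA / (Fintype.card BA : ℝ)) * eB w.2 w'.2)
        ≤ (T.card : ℝ) * ((((T.image Prod.snd).sup fun v' => (T.filter fun w => w.2 = v').card : ℕ) : ℝ)
            * (βB + 1)) * (αA / (Fintype.card BA : ℝ)) := by
      have hrow : ∀ w ∈ T, ∑ w' ∈ T, eB w.2 w'.2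
          ≤ (((T.image Prod.snd).sup fun v' => (T.filter fun w => w.2 = v').card : ℕ) : ℝ)
            * (βB + 1) := by
        intro w _
        calc ∑ w' ∈ T, eB w.2 w'.2
            ≤ (((T.image Prod.snd).sup fun v' => (T.filter fun w => w.2 = v').card : ℕ) : ℝ)
              * ∑ v' : (Fin n → V), eB w.2 v' :=
              sum_comp_le T Prod.snd (eB w.2) (heB0 w.2)
          _ ≤ _ := mul_le_mul_of_nonneg_left (heB2 w.2) hMV0
      calc ∑ w ∈ T, ∑ w' ∈ T, (αA / (Fintype.card BA : ℝ)) * eB w.2 w'.2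
          = ∑ w ∈ T, (αA / (Fintype.card BA : ℝ)) * ∑ w' ∈ T, eB w.2 w'.2 := by
            simp_rw [← Finset.mul_sum]
        _ ≤ ∑ w ∈ T, (αA / (Fintype.card BA : ℝ)) *
              ((((T.image Prod.snd).sup fun v' => (T.filter fun w => w.2 = v').card : ℕ) : ℝ)
                * (βB + 1)) := by
            refine Finset.sum_le_sum fun w hw => ?_
            exact mul_le_mul_of_nonneg_left (hrow w hw) (div_nonneg hαA hm.le)
        _ = _ := by
            rw [Finset.sum_const, nsmul_eq_mul]; ring
    have hP3 : (∑ w ∈ T, ∑ w' ∈ T, eA w.1 w'.1 * (αB / (Fintype.card BB : ℝ)))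
        ≤ (T.card : ℝ) * ((((T.image Prod.fst).sup fun u' => (T.filter fun w => w.1 = u').card : ℕ) : ℝ)
            * (βA + 1)) * (αB / (Fintype.card BB : ℝ)) := by
      have hrow : ∀ w ∈ T, ∑ w' ∈ T, eA w.1 w'.1
          ≤ (((T.image Prod.fst).sup fun u' => (T.filter fun w => w.1 = u').card : ℕ) : ℝ)
            * (βA + 1) := by
        intro w _
        calc ∑ w' ∈ T, eA w.1 w'.1
            ≤ (((T.image Prod.fst).sup fun u' => (T.filter fun w => w.1 = u').card : ℕ) : ℝ)
              * ∑ u' : (Fin n → U), eA w.1 u' :=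
              sum_comp_le T Prod.fst (eA w.1) (heA0 w.1)
          _ ≤ _ := mul_le_mul_of_nonneg_left (heA2 w.1) hMU0
      calc ∑ w ∈ T, ∑ w' ∈ T, eA w.1 w'.1 * (αB / (Fintype.card BB : ℝ))
          = ∑ w ∈ T, (∑ w' ∈ T, eA w.1 w'.1) * (αB / (Fintype.card BB : ℝ)) := by
            simp_rw [← Finset.sum_mul]
        _ ≤ ∑ w ∈ T, ((((T.image Prod.fst).sup fun u' => (T.filter fun w => w.1 = u').card : ℕ) : ℝ)
              * (βA + 1)) * (αB / (Fintype.card BB : ℝ)) := by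
            refine Finset.sum_le_sum fun w hw => ?_
            exact mul_le_mul_of_nonneg_right (hrow w hw) (div_nonneg hαB hk.le)
        _ = _ := by
            rw [Finset.sum_const, nsmul_eq_mul]; ring
    have hP4 : (∑ w ∈ T, ∑ w' ∈ T, eA w.1 w'.1 * eB w.2 w'.2)
        ≤ (T.card : ℝ) * ((βA + 1) * (βB + 1)) := by
      have hrow : ∀ w ∈ T, ∑ w' ∈ T, eA w.1 w'.1 * eB w.2 w'.2 ≤ (βA + 1) * (βB + 1) := by
        intro w _
        calc ∑ w' ∈ T, eA w.1 w'.1 * eB w.2 w'.2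
            ≤ ∑ w' : (Fin n → U) × (Fin n → V), eA w.1 w'.1 * eB w.2 w'.2 :=
              Finset.sum_le_sum_of_subset_of_nonneg (Finset.subset_univ T)
                (fun w' _ _ => mul_nonneg (heA0 w.1 w'.1) (heB0 w.2 w'.2))
          _ = (∑ u' : (Fin n → U), eA w.1 u') * (∑ v' : (Fin n → V), eB w.2 v') := by
              rw [Fintype.sum_prod_type, Finset.sum_mul_sum]
          _ ≤ (βA + 1) * (βB + 1) := by
              refine mul_le_mul (heA2 w.1) (heB2 w.2)
                (Finset.sum_nonneg fun v' _ => heB0 w.2 v') (by linarith)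
      calc ∑ w ∈ T, ∑ w' ∈ T, eA w.1 w'.1 * eB w.2 w'.2
          ≤ ∑ _w ∈ T, (βA + 1) * (βB + 1) := Finset.sum_le_sum hrow
        _ = (T.card : ℝ) * ((βA + 1) * (βB + 1)) := by
            rw [Finset.sum_const, nsmul_eq_mul]
    calc ∑ w ∈ T, ∑ w' ∈ T, collP p F w.1 w'.1 * collP q Gf w.2 w'.2
        ≤ _ := step1
      _ = _ := step2
      _ ≤ _ := by rw [hP1]; exact add_le_add (add_le_add (add_le_add le_rfl hP2) hP3) hP4
  -- put everything together
  have hm' : (Fintype.card BA : ℝ) ≠ 0 := ne_of_gt hm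
  have hk' : (Fintype.card BB : ℝ) ≠ 0 := ne_of_gt hk
  have ht' : (T.card : ℝ) ≠ 0 := ne_of_gt ht
  calc ∑ a : 𝒜, ∑ b : ℬ, ∑ ba : BA, ∑ bb : BB,
        (if ∀ w ∈ T, ¬(F a w.1 = ba ∧ Gf b w.2 = bb)
          then p a * q b * (1 / (Fintype.card BA : ℝ)) * (1 / (Fintype.card BB : ℝ))
          else 0)
      = ∑ ω : 𝒜 × ℬ × BA × BB, (if N ω = 0 then μ ω else 0) := by
        simp only [hμdef, hNdef, Fintype.sum_prod_type]
        refine Finset.sum_congr rfl fun a _ => Finset.sum_congr rfl fun b _ =>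
          Finset.sum_congr rfl fun ba _ => Finset.sum_congr rfl fun bb _ => ?_
        refine if_congr ?_ rfl rfl
        rw [Nat.cast_eq_zero, Finset.card_eq_zero, Finset.filter_eq_empty_iff]
    _ ≤ (∑ ω : 𝒜 × ℬ × BA × BB, μ ω * N ω ^ 2) /
          (∑ ω : 𝒜 × ℬ × BA × BB, μ ω * N ω) ^ 2 - 1 :=
        pz_bound μ N hμpos hμ1 hE1pos
    _ = (∑ w ∈ T, ∑ w' ∈ T, collP p F w.1 w'.1 * collP q Gf w.2 w'.2) *
          ((Fintype.card BA : ℝ) * (Fintype.card BB : ℝ)) / (T.card : ℝ)^2 - 1 := by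
        rw [hE1, hE2]
        field_simp
    _ ≤ ((T.card : ℝ)^2 * (αA * αB / ((Fintype.card BA : ℝ) * (Fintype.card BB : ℝ)))
          + (T.card : ℝ) * ((((T.image Prod.snd).sup fun v' => (T.filter fun w => w.2 = v').card : ℕ) : ℝ)
              * (βB + 1)) * (αA / (Fintype.card BA : ℝ))
          + (T.card : ℝ) * ((((T.image Prod.fst).sup fun u' => (T.filter fun w => w.1 = u').card : ℕ) : ℝ)
              * (βA + 1)) * (αB / (Fintype.card BB : ℝ))
          + (T.card : ℝ) * ((βA + 1) * (βB + 1))) *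
          ((Fintype.card BA : ℝ) * (Fintype.card BB : ℝ)) / (T.card : ℝ)^2 - 1 := by
        gcongr
    _ = αA * αB - 1
        + (Fintype.card BB : ℝ)
            * (((T.image Prod.snd).sup fun v' => (T.filter fun w => w.2 = v').card : ℕ) : ℝ)
            * αA * (βB + 1) / (T.card : ℝ)
        + (Fintype.card BA : ℝ)
            * (((T.image Prod.fst).sup fun u' => (T.filter fun w => w.1 = u').card : ℕ) : ℝ)
            * αB * (βA + 1) / (T.card : ℝ)
        + (Fintype.card BA : ℝ) * (Fintype.card BB : ℝ) * (βA + βB + βA * βB + 1)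
            / (T.card : ℝ) := by
        field_simp
        ring
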